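/- For any family F of 3-uniform hypergraphs, the limit as n → ∞ of ex_pal(n, F)/n³ exists, where ex_pal(n,F) is the maximum number of patterns in an F-deficient palette on n colors. -/

import Mathlib

/-- A 3-uniform hypergraph: a vertex type together with a set of edges,
each of which is a set of exactly three vertices. -/
structure ThreeGraph where
  V : Type
  E : Set (Set V)
  card_eq : ∀ e ∈ E, e.ncard = 3

/-- A palette `P ⊆ C³` paints a 3-graph `G` if there exist a strict total order `r`
on the vertices and a coloring `χ` of pairs of vertices by colors of `P` such that
every edge `{x,y,z}` with `r x y` and `r y z` yields a pattern of `P`. -/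
def Paints {C : Type} (P : Set (C × C × C)) (G : ThreeGraph) : Prop :=
  ∃ r : G.V → G.V → Prop, IsStrictTotalOrder G.V r ∧
    ∃ χ : G.V → G.V → C,
      ∀ e ∈ G.E, ∀ x y z : G.V, r x y → r y z → e = {x, y, z} →
        (χ x y, χ x z, χ y z) ∈ P

/-- A palette is `𝓕`-deficient if it paints no member of the family `𝓕`. -/
def Deficient {C : Type} (P : Set (C × C × C)) (𝓕 : Set ThreeGraph) : Prop :=
  ∀ F ∈ 𝓕, ¬ Paints P F


/-- `exPal n 𝓕`: the maximum number of patterns of an `𝓕`-deficient palette on `n` colors. -/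
noncomputable def exPal (n : ℕ) (𝓕 : Set ThreeGraph) : ℕ :=
  sSup {m | ∃ P : Finset (Fin n × Fin n × Fin n),
    Deficient (P : Set (Fin n × Fin n × Fin n)) 𝓕 ∧ P.card = m}

lemma paints_mono {C : Type} {P Q : Set (C × C × C)} (h : P ⊆ Q) {G : ThreeGraph}
    (hp : Paints P G) : Paints Q G := by
  obtain ⟨r, hr, χ, hχ⟩ := hp
  exact ⟨r, hr, χ, fun e he x y z hxy hyz hexyz => h (hχ e he x y z hxy hyz hexyz)⟩

lemma deficient_anti {C : Type} {P Q : Set (C × C × C)} (h : P ⊆ Q) {𝓕 : Set ThreeGraph}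
    (hQ : Deficient Q 𝓕) : Deficient P 𝓕 :=
  fun F hF hp => hQ F hF (paints_mono h hp)

lemma deficient_comap {C D : Type} (f : C → D) {P : Set (D × D × D)} {𝓕 : Set ThreeGraph}
    (h : Deficient P 𝓕) :
    Deficient ((fun p : C × C × C => (f p.1, f p.2.1, f p.2.2)) ⁻¹' P) 𝓕 := by
  intro F hF hp
  obtain ⟨r, hr, χ, hχ⟩ := hp
  exact h F hF ⟨r, hr, fun a b => f (χ a b),
    fun e he x y z hxy hyz hexyz => hχ e he x y z hxy hyz hexyz⟩

/-- nondegenerate patterns -/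
def Nondeg {C : Type} (p : C × C × C) : Prop :=
  p.1 ≠ p.2.1 ∧ p.1 ≠ p.2.2 ∧ p.2.1 ≠ p.2.2

def gSet (n : ℕ) (𝓕 : Set ThreeGraph) : Set ℕ :=
  {m | ∃ P : Finset (Fin n × Fin n × Fin n),
    Deficient (P : Set (Fin n × Fin n × Fin n)) 𝓕 ∧ (∀ p ∈ P, Nondeg p) ∧ P.card = m}

noncomputable def gg (n : ℕ) (𝓕 : Set ThreeGraph) : ℕ := sSup (gSet n 𝓕)

def exSet (n : ℕ) (𝓕 : Set ThreeGraph) : Set ℕ :=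
  {m | ∃ P : Finset (Fin n × Fin n × Fin n),
    Deficient (P : Set (Fin n × Fin n × Fin n)) 𝓕 ∧ P.card = m}

lemma exPal_eq_sSup (n : ℕ) (𝓕 : Set ThreeGraph) : exPal n 𝓕 = sSup (exSet n 𝓕) := rfl

lemma exSet_bddAbove (n : ℕ) (𝓕 : Set ThreeGraph) : BddAbove (exSet n 𝓕) := by
  refine ⟨n ^ 3, fun m hm => ?_⟩
  obtain ⟨P, -, rfl⟩ := hm
  calc P.card ≤ Fintype.card (Fin n × Fin n × Fin n) := Finset.card_le_univ P
    _ = n ^ 3 := by simp [Fintype.card_prod]; ring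

lemma gSet_bddAbove (n : ℕ) (𝓕 : Set ThreeGraph) : BddAbove (gSet n 𝓕) := by
  refine (exSet_bddAbove n 𝓕).mono ?_
  rintro m ⟨P, h1, h2, h3⟩
  exact ⟨P, h1, h3⟩

lemma gg_le_exPal (n : ℕ) (𝓕 : Set ThreeGraph) : gg n 𝓕 ≤ exPal n 𝓕 := by
  rcases Set.eq_empty_or_nonempty (gSet n 𝓕) with h | h
  · simp [gg, h]
  · exact csSup_le_csSup (exSet_bddAbove n 𝓕) h (fun m ⟨P, h1, h2, h3⟩ => ⟨P, h1, h3⟩)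

open Finset in
lemma exPal_le (n : ℕ) (𝓕 : Set ThreeGraph) : exPal n 𝓕 ≤ gg n 𝓕 + 3 * n ^ 2 := by
  classical
  rcases Set.eq_empty_or_nonempty (exSet n 𝓕) with h | h
  · simp [exPal_eq_sSup, h]
  · have hmem : exPal n 𝓕 ∈ exSet n 𝓕 := Nat.sSup_mem h (exSet_bddAbove n 𝓕)
    obtain ⟨P, hP, hcard⟩ := hmem
    classical
    set Pnd := P.filter (fun p => Nondeg p) with hPnd
    set Pdeg := P.filter (fun p => ¬ Nondeg p) with hPdeg
    have hsplit : P.card = Pnd.card + Pdeg.card := (card_filter_add_card_filter_not _).symm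
    have h1 : Pnd.card ≤ gg n 𝓕 := by
      apply le_csSup (gSet_bddAbove n 𝓕)
      refine ⟨Pnd, ?_, fun p hp => (mem_filter.1 hp).2, rfl⟩
      exact deficient_anti (by simp only [hPnd, Finset.coe_filter]; exact fun x hx => hx.1) hP
    have h2 : Pdeg.card ≤ 3 * n ^ 2 := by
      have : Pdeg ⊆ (Finset.univ.filter (fun p : Fin n × Fin n × Fin n => p.1 = p.2.1))
          ∪ (Finset.univ.filter (fun p => p.1 = p.2.2))
          ∪ (Finset.univ.filter (fun p => p.2.1 = p.2.2)) := by
        intro p hp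
        have := (mem_filter.1 hp).2
        simp only [Nondeg, not_and_or, not_not, ne_eq] at this
        simp only [mem_union, mem_filter, mem_univ, true_and]
        tauto
      have hc : ∀ (f g : Fin n × Fin n × Fin n → Fin n),
          (∀ p q : Fin n × Fin n × Fin n, p.1 = p.2.1 → True) → True := fun _ _ _ => trivial
      have key : ∀ (s : Finset (Fin n × Fin n × Fin n)) (f : Fin n × Fin n × Fin n → Fin n × Fin n)
          (hf : Set.InjOn f s), s.card ≤ n ^ 2 := by
        intro s f hf
        calc s.card = (s.image f).card := (Finset.card_image_of_injOn hf).symm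
          _ ≤ Fintype.card (Fin n × Fin n) := Finset.card_le_univ _
          _ = n ^ 2 := by simp [sq]
      calc Pdeg.card ≤ _ := Finset.card_le_card this
        _ ≤ _ := (Finset.card_union_le _ _)
        _ ≤ _ + _ := Nat.add_le_add_right (Finset.card_union_le _ _) _
        _ ≤ n ^ 2 + n ^ 2 + n ^ 2 := by
            gcongr
            · exact key _ (fun p => (p.1, p.2.2)) (by
                intro p hp q hq hpq
                simp only [mem_coe, mem_filter] at hp hq
                obtain ⟨p1, p2, p3⟩ := p; obtain ⟨q1, q2, q3⟩ := q
                simp_all [Prod.ext_iff])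
            · exact key _ (fun p => (p.1, p.2.1)) (by
                intro p hp q hq hpq
                simp only [mem_coe, mem_filter] at hp hq
                obtain ⟨p1, p2, p3⟩ := p; obtain ⟨q1, q2, q3⟩ := q
                simp_all [Prod.ext_iff])
            · exact key _ (fun p => (p.1, p.2.1)) (by
                intro p hp q hq hpq
                simp only [mem_coe, mem_filter] at hp hq
                obtain ⟨p1, p2, p3⟩ := p; obtain ⟨q1, q2, q3⟩ := q
                simp_all [Prod.ext_iff])
        _ = 3 * n ^ 2 := by ring
    omega

open Finset in
lemma card_powersetCard_filter_supset {α : Type*} [Fintype α] [DecidableEq α]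
    (T : Finset α) (m : ℕ) (hTm : T.card ≤ m) :
    ((Finset.univ.powersetCard m).filter (fun S => T ⊆ S)).card
      = (Fintype.card α - T.card).choose (m - T.card) := by
  classical
  have hc : (Finset.univ \ T).card = Fintype.card α - T.card := by
    rw [Finset.card_sdiff_of_subset (Finset.subset_univ T), Finset.card_univ]
  rw [← hc, ← Finset.card_powersetCard]
  · apply Finset.card_bij' (fun S _ => S \ T) (fun U _ => U ∪ T)
    · intro S hS
      simp only [mem_filter, mem_powersetCard] at hS
      obtain ⟨⟨hSu, hSc⟩, hTS⟩ := hS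
      rw [mem_powersetCard]
      constructor
      · exact fun x hx => by
          simp only [mem_sdiff] at hx ⊢
          exact ⟨mem_univ x, hx.2⟩
      · rw [Finset.card_sdiff_of_subset hTS, hSc]
    · intro U hU
      rw [mem_powersetCard] at hU
      obtain ⟨hUs, hUc⟩ := hU
      have hdisj : Disjoint U T := by
        refine Finset.disjoint_left.2 fun x hx hxT => ?_
        have := hUs hx
        simp only [mem_sdiff] at this
        exact this.2 hxT
      simp only [mem_filter, mem_powersetCard]
      refine ⟨⟨Finset.subset_univ _, ?_⟩, Finset.subset_union_right⟩
      rw [Finset.card_union_of_disjoint hdisj, hUc]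
      omega
    · intro S hS
      simp only [mem_filter, mem_powersetCard] at hS
      exact Finset.sdiff_union_of_subset hS.2
    · intro U hU
      rw [mem_powersetCard] at hU
      have hdisj : Disjoint U T := by
        refine Finset.disjoint_left.2 fun x hx hxT => ?_
        have := hU.1 hx
        simp only [mem_sdiff] at this
        exact this.2 hxT
      exact Finset.union_sdiff_cancel_right hdisj

open Finset in
lemma claimA (𝓕 : Set ThreeGraph) {m n : ℕ} (S : Finset (Fin n)) (hS : S.card = m)
    (P : Finset (Fin n × Fin n × Fin n))
    (hPdef : Deficient (P : Set (Fin n × Fin n × Fin n)) 𝓕)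
    (hPnd : ∀ p ∈ P, Nondeg p) :
    (P.filter (fun p => p.1 ∈ S ∧ p.2.1 ∈ S ∧ p.2.2 ∈ S)).card ≤ gg m 𝓕 := by
  classical
  let e : {x // x ∈ S} ≃ Fin m := S.equivFin.trans (finCongr hS)
  let φ : Fin m → Fin n := fun i => (e.symm i : {x // x ∈ S})
  have hφinj : Function.Injective φ := fun a b hab => by
    apply e.symm.injective
    exact Subtype.ext hab
  have hφS : ∀ i, φ i ∈ S := fun i => (e.symm i).2
  let Q : Finset (Fin m × Fin m × Fin m) :=
    Finset.univ.filter (fun q => (φ q.1, φ q.2.1, φ q.2.2) ∈ P)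
  have hQcoe : (Q : Set (Fin m × Fin m × Fin m))
      = (fun q : Fin m × Fin m × Fin m => (φ q.1, φ q.2.1, φ q.2.2)) ⁻¹' (P : Set _) := by
    ext q; simp [Q]
  have hQdef : Deficient (Q : Set (Fin m × Fin m × Fin m)) 𝓕 := by
    rw [hQcoe]; exact deficient_comap φ hPdef
  have hQnd : ∀ q ∈ Q, Nondeg q := by
    intro q hq
    have hmem : (φ q.1, φ q.2.1, φ q.2.2) ∈ P := (Finset.mem_filter.1 hq).2
    have := hPnd _ hmem
    obtain ⟨h1, h2, h3⟩ := this
    exact ⟨fun h => h1 (congrArg φ h), fun h => h2 (congrArg φ h),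
      fun h => h3 (congrArg φ h)⟩
  have hcard : (P.filter (fun p => p.1 ∈ S ∧ p.2.1 ∈ S ∧ p.2.2 ∈ S)).card = Q.card := by
    rw [show P.filter (fun p => p.1 ∈ S ∧ p.2.1 ∈ S ∧ p.2.2 ∈ S)
        = Q.image (fun q => (φ q.1, φ q.2.1, φ q.2.2)) from ?_]
    · rw [Finset.card_image_of_injective _ (fun a b hab => by
        obtain ⟨a1, a2, a3⟩ := a; obtain ⟨b1, b2, b3⟩ := b
        simp only [Prod.mk.injEq] at hab
        exact Prod.ext (hφinj hab.1) (Prod.ext (hφinj hab.2.1) (hφinj hab.2.2)))]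
    · ext p
      simp only [Finset.mem_filter, Finset.mem_image, Q, Finset.mem_univ, true_and]
      constructor
      · rintro ⟨hp, h1, h2, h3⟩
        refine ⟨(e ⟨p.1, h1⟩, e ⟨p.2.1, h2⟩, e ⟨p.2.2, h3⟩), ?_, ?_⟩
        · simpa [φ] using hp
        · simp [φ]
      · rintro ⟨q, hq, rfl⟩
        exact ⟨hq, hφS _, hφS _, hφS _⟩
  rw [hcard]
  exact le_csSup (gSet_bddAbove m 𝓕) ⟨Q, hQdef, hQnd, rfl⟩

open Finset in
lemma gg_mul_le (𝓕 : Set ThreeGraph) {m n : ℕ} (h3 : 3 ≤ m) (hmn : m ≤ n) :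
    gg n 𝓕 * (n - 3).choose (m - 3) ≤ n.choose m * gg m 𝓕 := by
  classical
  rcases Set.eq_empty_or_nonempty (gSet n 𝓕) with h | h
  · simp [gg, h]
  obtain ⟨P, hPdef, hPnd, hPcard⟩ := Nat.sSup_mem h (gSet_bddAbove n 𝓕)
  rw [← gg] at hPcard  -- no-op safeguard
  have key : ∑ S ∈ Finset.univ.powersetCard m,
      (P.filter (fun p => p.1 ∈ S ∧ p.2.1 ∈ S ∧ p.2.2 ∈ S)).card
      = P.card * (n - 3).choose (m - 3) := by
    have step1 : ∀ S : Finset (Fin n),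
        (P.filter (fun p => p.1 ∈ S ∧ p.2.1 ∈ S ∧ p.2.2 ∈ S)).card
        = ∑ p ∈ P, if p.1 ∈ S ∧ p.2.1 ∈ S ∧ p.2.2 ∈ S then 1 else 0 :=
      fun S => Finset.card_filter _ _
    calc ∑ S ∈ Finset.univ.powersetCard m,
          (P.filter (fun p => p.1 ∈ S ∧ p.2.1 ∈ S ∧ p.2.2 ∈ S)).card
        = ∑ S ∈ Finset.univ.powersetCard m, ∑ p ∈ P,
            if p.1 ∈ S ∧ p.2.1 ∈ S ∧ p.2.2 ∈ S then 1 else 0 := by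
          exact Finset.sum_congr rfl (fun S _ => step1 S)
      _ = ∑ p ∈ P, ∑ S ∈ Finset.univ.powersetCard m,
            if p.1 ∈ S ∧ p.2.1 ∈ S ∧ p.2.2 ∈ S then 1 else 0 := Finset.sum_comm
      _ = ∑ p ∈ P, (n - 3).choose (m - 3) := by
          refine Finset.sum_congr rfl (fun p hp => ?_)
          rw [← Finset.card_filter]
          obtain ⟨h1, h2, h3'⟩ := hPnd p hp
          have hT : ({p.1, p.2.1, p.2.2} : Finset (Fin n)).card = 3 :=
            Finset.card_eq_three.2 ⟨p.1, p.2.1, p.2.2, h1, h2, h3', rfl⟩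
          have := card_powersetCard_filter_supset ({p.1, p.2.1, p.2.2} : Finset (Fin n)) m
            (by rw [hT]; exact h3)
          rw [hT, Fintype.card_fin] at this
          rw [← this]
          congr 1
          apply Finset.filter_congr
          intro S _
          simp [Finset.insert_subset_iff]
      _ = P.card * (n - 3).choose (m - 3) := by
          rw [Finset.sum_const, smul_eq_mul]
  have bound : ∑ S ∈ Finset.univ.powersetCard m,
      (P.filter (fun p => p.1 ∈ S ∧ p.2.1 ∈ S ∧ p.2.2 ∈ S)).card
      ≤ ∑ _S ∈ (Finset.univ : Finset (Fin n)).powersetCard m, gg m 𝓕 := by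
    refine Finset.sum_le_sum (fun S hS => ?_)
    rw [Finset.mem_powersetCard] at hS
    exact claimA 𝓕 S hS.2 P hPdef hPnd
  rw [key] at bound
  rw [Finset.sum_const, smul_eq_mul, Finset.card_powersetCard, Finset.card_univ,
    Fintype.card_fin] at bound
  rw [← hPcard] at *
  calc P.card * (n - 3).choose (m - 3) ≤ n.choose m * gg m 𝓕 := bound

lemma six_mul_choose_three (n : ℕ) : 6 * n.choose 3 = n * (n - 1) * (n - 2) := by
  have h := Nat.descFactorial_eq_factorial_mul_choose n 3
  have h2 : n.descFactorial 3 = (n - 2) * ((n - 1) * n) := by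
    simp [Nat.descFactorial_succ, Nat.descFactorial_zero]
  rw [h2] at h
  have h3 : Nat.factorial 3 = 6 := rfl
  rw [h3] at h
  rw [← h]
  ring

lemma gg_choose3 (𝓕 : Set ThreeGraph) {m n : ℕ} (h3 : 3 ≤ m) (hmn : m ≤ n) :
    gg n 𝓕 * m.choose 3 ≤ n.choose 3 * gg m 𝓕 := by
  have h := gg_mul_le 𝓕 h3 hmn
  have hid : n.choose m * m.choose 3 = n.choose 3 * (n - 3).choose (m - 3) :=
    Nat.choose_mul (n := n) h3
  have hpos : 0 < (n - 3).choose (m - 3) := Nat.choose_pos (by omega)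
  refine Nat.le_of_mul_le_mul_right ?_ hpos
  calc gg n 𝓕 * m.choose 3 * ((n - 3).choose (m - 3))
      = gg n 𝓕 * ((n - 3).choose (m - 3)) * m.choose 3 := by ring
    _ ≤ n.choose m * gg m 𝓕 * m.choose 3 := Nat.mul_le_mul_right _ h
    _ = n.choose m * m.choose 3 * gg m 𝓕 := by ring
    _ = n.choose 3 * (n - 3).choose (m - 3) * gg m 𝓕 := by rw [hid]
    _ = n.choose 3 * gg m 𝓕 * ((n - 3).choose (m - 3)) := by ring

open Filter in
/-- The limit of `ex_pal(n,𝓕)/n³` exists. -/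
theorem exPal_div_cube_tendsto (𝓕 : Set ThreeGraph) :
    ∃ L : ℝ, Tendsto (fun n : ℕ => (exPal n 𝓕 : ℝ) / (n : ℝ) ^ 3) atTop (nhds L) := by

  set a : ℕ → ℝ := fun k => (gg (k + 3) 𝓕 : ℝ) / ((k + 3).choose 3 : ℝ) with ha
  have hCpos : ∀ k : ℕ, (0 : ℝ) < ((k + 3).choose 3 : ℝ) := by
    intro k
    exact_mod_cast Nat.choose_pos (by omega)
  have hanti : Antitone a := by
    intro k l hkl
    rw [ha]
    rw [div_le_div_iff₀ (hCpos l) (hCpos k)]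
    have h := gg_choose3 𝓕 (m := k + 3) (n := l + 3) (by omega) (by omega)
    calc (gg (l + 3) 𝓕 : ℝ) * ((k + 3).choose 3 : ℝ)
        = ((gg (l + 3) 𝓕 * (k + 3).choose 3 : ℕ) : ℝ) := by push_cast; ring
      _ ≤ (((l + 3).choose 3 * gg (k + 3) 𝓕 : ℕ) : ℝ) := by exact_mod_cast h
      _ = (gg (k + 3) 𝓕 : ℝ) * ((l + 3).choose 3 : ℝ) := by push_cast; ring
  have hbdd : BddBelow (Set.range a) := by
    refine ⟨0, fun x hx => ?_⟩
    obtain ⟨k, rfl⟩ := hx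
    exact div_nonneg (Nat.cast_nonneg _) (Nat.cast_nonneg _)
  set L' : ℝ := ⨅ k, a k with hL'
  have hLa : Tendsto a atTop (nhds L') := tendsto_atTop_ciInf hanti hbdd
  have hf : Tendsto (fun n : ℕ => (gg n 𝓕 : ℝ) / (n.choose 3 : ℝ)) atTop (nhds L') :=
    (tendsto_add_atTop_iff_nat 3).mp hLa
  -- choose(n,3)/n^3 → 1/6
  have hc : Tendsto (fun n : ℕ => ((n.choose 3 : ℕ) : ℝ) / (n : ℝ) ^ 3) atTop
      (nhds (1 / 6)) := by
    have heq : ∀ᶠ n : ℕ in atTop, ((1 : ℝ) - 1 / n) * (1 - 2 / n) / 6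
        = ((n.choose 3 : ℕ) : ℝ) / (n : ℝ) ^ 3 := by
      filter_upwards [eventually_ge_atTop 3] with n hn
      have hn0 : (n : ℝ) ≠ 0 := by positivity
      have key : ((n.choose 3 : ℕ) : ℝ) = (n : ℝ) * ((n : ℝ) - 1) * ((n : ℝ) - 2) / 6 := by
        have h6 := congrArg (fun x : ℕ => (x : ℝ)) (six_mul_choose_three n)
        push_cast [Nat.cast_sub (by omega : 1 ≤ n), Nat.cast_sub (by omega : 2 ≤ n)] at h6
        linarith
      rw [key]
      field_simp
    have hlim : Tendsto (fun n : ℕ => ((1 : ℝ) - 1 / n) * (1 - 2 / n) / 6) atTop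
        (nhds (1 / 6)) := by
      have h1 : Tendsto (fun n : ℕ => (1 : ℝ) - 1 / n) atTop (nhds 1) := by
        simpa using (tendsto_const_nhds (x := (1 : ℝ))).sub tendsto_one_div_atTop_nhds_zero_nat
      have h2 : Tendsto (fun n : ℕ => (1 : ℝ) - 2 / n) atTop (nhds 1) := by
        have : Tendsto (fun n : ℕ => (2 : ℝ) / n) atTop (nhds 0) := by
          simpa [div_eq_mul_inv] using tendsto_one_div_atTop_nhds_zero_nat.const_mul (2 : ℝ)
        simpa using tendsto_const_nhds.sub this
      have := (h1.mul h2).div_const (6 : ℝ)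
      simpa using this
    exact hlim.congr' heq
  -- error term → 0
  have hd : Tendsto (fun n : ℕ => ((exPal n 𝓕 : ℝ) - (gg n 𝓕 : ℝ)) / (n : ℝ) ^ 3) atTop
      (nhds 0) := by
    have hup : Tendsto (fun n : ℕ => (3 : ℝ) / n) atTop (nhds 0) := by
      simpa [div_eq_mul_inv] using tendsto_one_div_atTop_nhds_zero_nat.const_mul (3 : ℝ)
    refine tendsto_of_tendsto_of_tendsto_of_le_of_le' tendsto_const_nhds hup ?_ ?_
    · filter_upwards with n
      have := gg_le_exPal n 𝓕
      have h1 : (0 : ℝ) ≤ (exPal n 𝓕 : ℝ) - (gg n 𝓕 : ℝ) := by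
        have : (gg n 𝓕 : ℝ) ≤ (exPal n 𝓕 : ℝ) := by exact_mod_cast this
        linarith
      positivity
    · filter_upwards [eventually_ge_atTop 1] with n hn
      have hn0 : (0 : ℝ) < (n : ℝ) := by exact_mod_cast hn
      have hle : (exPal n 𝓕 : ℝ) - (gg n 𝓕 : ℝ) ≤ 3 * (n : ℝ) ^ 2 := by
        have := exPal_le n 𝓕
        have : (exPal n 𝓕 : ℝ) ≤ (gg n 𝓕 : ℝ) + 3 * (n : ℝ) ^ 2 := by exact_mod_cast this
        linarith
      rw [div_le_div_iff₀ (by positivity) hn0]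
      calc ((exPal n 𝓕 : ℝ) - (gg n 𝓕 : ℝ)) * n ≤ 3 * (n : ℝ) ^ 2 * n := by
            apply mul_le_mul_of_nonneg_right hle hn0.le
        _ = 3 * (n : ℝ) ^ 3 := by ring
  refine ⟨L' * (1 / 6) + 0, ?_⟩
  have hFG : Tendsto (fun n : ℕ => ((gg n 𝓕 : ℝ) / (n.choose 3 : ℝ))
      * (((n.choose 3 : ℕ) : ℝ) / (n : ℝ) ^ 3)
      + ((exPal n 𝓕 : ℝ) - (gg n 𝓕 : ℝ)) / (n : ℝ) ^ 3) atTop (nhds (L' * (1 / 6) + 0)) :=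
    (hf.mul hc).add hd
  refine hFG.congr' ?_
  filter_upwards [eventually_ge_atTop 3] with n hn
  have hn0 : (n : ℝ) ≠ 0 := by
    have : n ≠ 0 := by omega
    exact_mod_cast this
  have hC0 : ((n.choose 3 : ℕ) : ℝ) ≠ 0 := by
    have : 0 < n.choose 3 := Nat.choose_pos hn
    exact_mod_cast this.ne'
  have h1 : (gg n 𝓕 : ℝ) / (n.choose 3 : ℝ) * (((n.choose 3 : ℕ) : ℝ) / (n : ℝ) ^ 3)
      = (gg n 𝓕 : ℝ) / (n : ℝ) ^ 3 := by
    field_simp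
  rw [h1, ← add_div]
  congr 1
  ring
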